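/- Assume π⁺ = π⁻ = π (so w_h^IM = w_h^EX = W(π)). Then for every g: if α_r·πʷ > π, the point (W(π), w̄_r) maximizes the profit over the feasible set F, and if α_r·πʷ < π, the point (W(π), w̲_r) maximizes the profit over F. -/
import Mathlib


open Set

noncomputable section

/-- Net electricity exchange. -/
def netz (αr ηh wh wr g : ℝ) : ℝ := wr / αr - wh / ηh - g

/-- Electricity payment under net metering. -/
def epay (πp πm π0 αr ηh wh wr g : ℝ) : ℝ :=
  πp * max (netz αr ηh wh wr g) 0 + πm * min (netz αr ηh wh wr g) 0 + π0

/-- WDP profit. -/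
def profit (πw πp πm π0 αr αh ηh : ℝ) (C : ℝ → ℝ) (wh wr g : ℝ) : ℝ :=
  πw * (wh + wr) - epay πp πm π0 αr ηh wh wr g - C (wh / αh)

/-- clamp(x, a, b) = max(a, min(x, b)). -/
def clampR (x a b : ℝ) : ℝ := max a (min x b)

/-- Value function: sup of profit over the feasible rectangle. -/
def Pstar (πw πp πm π0 αr αh ηh : ℝ) (C : ℝ → ℝ) (wlh wuh wlr wur g : ℝ) : ℝ :=
  sSup ((fun p : ℝ × ℝ => profit πw πp πm π0 αr αh ηh C p.1 p.2 g) ''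
    (Icc wlh wuh ×ˢ Icc wlr wur))

/-- single electricity price π⁺ = π⁻ = π. -/
theorem special_tariff_single_price
    (πp πm π0 πw αh ηh αr wlh wuh wlr wur : ℝ) (C : ℝ → ℝ)
    (hπ : πm ≤ πp) (hπm : 0 ≤ πm) (hπw : 0 ≤ πw)
    (hαh : 0 < αh) (hηh : 0 < ηh) (hαr : 0 < αr)
    (hwlh : 0 ≤ wlh) (hwhb : wlh ≤ wuh) (hwlr : 0 ≤ wlr) (hwrb : wlr ≤ wur)
    (hC : StrictConvexOn ℝ univ C) (hCd : Differentiable ℝ C) (hCm : Monotone C)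
    (Wfun : ℝ → ℝ)
    (hWfun : ∀ δ : ℝ, Wfun δ ∈ Icc wlh wuh ∧
      ∀ w ∈ Icc wlh wuh,
        (πw + δ / ηh) * w - C (w / αh) ≤ (πw + δ / ηh) * Wfun δ - C (Wfun δ / αh))
    (π : ℝ) (hp : πp = π) (hm : πm = π) :
    ∀ g : ℝ,
      (π < αr * πw →
        ∀ wh ∈ Icc wlh wuh, ∀ wr ∈ Icc wlr wur,
          profit πw πp πm π0 αr αh ηh C wh wr g ≤
            profit πw πp πm π0 αr αh ηh C (Wfun π) wur g) ∧
      (αr * πw < π →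
        ∀ wh ∈ Icc wlh wuh, ∀ wr ∈ Icc wlr wur,
          profit πw πp πm π0 αr αh ηh C wh wr g ≤
            profit πw πp πm π0 αr αh ηh C (Wfun π) wlr g) := by
  intro g
  have hepay : ∀ wh wr : ℝ, epay πp πm π0 αr ηh wh wr g
      = π * (wr / αr - wh / ηh - g) + π0 := by
    intro wh wr
    simp only [epay, netz, hp, hm]
    rw [← mul_add, max_add_min]; ring
  constructor
  · intro hlt wh hwh wr hwr
    have key := (hWfun π).2 wh hwh
    have hwr2 : (πw - π / αr) * wr ≤ (πw - π / αr) * wur := by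
      apply mul_le_mul_of_nonneg_left hwr.2
      have : π / αr < πw := (div_lt_iff₀ hαr).2 (by linarith [mul_comm αr πw])
      linarith
    simp only [profit, hepay]
    ring_nf
    ring_nf at key hwr2
    linarith
  · intro hlt wh hwh wr hwr
    have key := (hWfun π).2 wh hwh
    have hwr2 : (πw - π / αr) * wr ≤ (πw - π / αr) * wlr := by
      rw [mul_comm (πw - π / αr) wr, mul_comm (πw - π / αr) wlr]
      apply mul_le_mul_of_nonpos_right hwr.1
      have : πw < π / αr := (lt_div_iff₀ hαr).2 (by linarith [mul_comm αr πw])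
      linarith
    simp only [profit, hepay]
    ring_nf
    ring_nf at key hwr2
    linarith
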